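/- Let X_1, …, X_N be compact subsets of ℝ^d, let c : X_1 × … × X_N → ℝ be continuous, and let μ_i be a Borel probability measure on X_i for each i ∈ {1,…,N}. For each ν ∈ ℕ and each i, let μ_i^{(ν)} be a finitely supported Borel probability measure on X_i, and assume that μ_i^{(ν)} converges weak* to μ_i as ν → ∞. Then the optimal cost of the discretized problem, inf{ ∫ c dγ : γ a Borel probability measure on X_1 × … × X_N with M_{X_i}γ = μ_i^{(ν)} for all i }, converges as ν → ∞ to the optimal cost of the continuous problem, inf{ ∫ c dγ : γ a Borel probability measure on X_1 × … × X_N with M_{X_i}γ = μ_i for all i }. -/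

import Mathlib

open MeasureTheory Filter Topology Set Function

section Partition
variable {S : Type*} [MeasurableSpace S] [MetricSpace S] [BorelSpace S] [CompactSpace S]

lemma frontier_biUnion_subset {ι α : Type*} [TopologicalSpace α] (s : Finset ι) (f : ι → Set α) :
    frontier (⋃ i ∈ s, f i) ⊆ ⋃ i ∈ s, frontier (f i) := by
  classical
  induction s using Finset.induction_on with
  | empty => simp
  | insert _ _ h ih =>
    rename_i a s
    simp only [Finset.mem_insert, Set.iUnion_iUnion_eq_or_left]
    refine (frontier_union_subset _ _).trans ?_
    refine (Set.union_subset_union Set.inter_subset_left Set.inter_subset_right).trans ?_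
    exact Set.union_subset_union subset_rfl ih

lemma exists_partition (p : Measure S) [IsFiniteMeasure p] {δ : ℝ} (hδ : 0 < δ) :
    ∃ (m : ℕ) (A : Fin m → Set S),
      (∀ j, MeasurableSet (A j)) ∧
      Pairwise (Disjoint on A) ∧
      (⋃ j, A j) = univ ∧
      (∀ j, ∀ x ∈ A j, ∀ y ∈ A j, dist x y ≤ δ) ∧
      (∀ j, p (frontier (A j)) = 0) := by
  classical
  have key : ∀ x : S, ∃ r : ℝ, r ∈ Set.Ioo (δ/4) (δ/2) ∧ p (frontier (Metric.ball x r)) = 0 := by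
    intro x
    obtain ⟨r, hr, hr2⟩ := MeasureTheory.exists_null_frontier_thickening p {x}
      (show δ/4 < δ/2 by linarith)
    exact ⟨r, hr, by rwa [Metric.thickening_singleton] at hr2⟩
  choose r hr hr0 using key
  have hrpos : ∀ x, 0 < r x := fun x => lt_trans (by linarith) (hr x).1
  have hcover : (univ : Set S) ⊆ ⋃ x : S, Metric.ball x (r x) := fun x _ =>
    Set.mem_iUnion.2 ⟨x, Metric.mem_ball_self (hrpos x)⟩
  obtain ⟨t, ht⟩ := isCompact_univ.elim_finite_subcover (fun x : S => Metric.ball x (r x))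
      (fun x => Metric.isOpen_ball) hcover
  set m := t.card with hm
  set e : Fin m ≃ {x // x ∈ t} := t.equivFin.symm with he
  set B : Fin m → Set S := fun j => Metric.ball ((e j : S)) (r (e j)) with hB
  set A : Fin m → Set S := fun j => B j \ ⋃ k ∈ Finset.Iio j, B k with hA
  have hBmeas : ∀ j, MeasurableSet (B j) := fun j => Metric.isOpen_ball.measurableSet
  have hAmem : ∀ x j, x ∈ A j ↔ (x ∈ B j ∧ ∀ k < j, x ∉ B k) := by
    intro x j
    simp [hA, Set.mem_diff, Set.mem_iUnion]
  refine ⟨m, A, ?_, ?_, ?_, ?_, ?_⟩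
  · intro j
    exact (hBmeas j).diff (MeasurableSet.biUnion (Finset.Iio j).countable_toSet
      (fun k _ => hBmeas k))
  · intro j k hjk
    rcases lt_or_gt_of_ne hjk with h | h
    · refine Set.disjoint_left.2 fun x hxj hxk => ?_
      exact ((hAmem x k).1 hxk).2 j h ((hAmem x j).1 hxj).1
    · refine Set.disjoint_left.2 fun x hxj hxk => ?_
      exact ((hAmem x j).1 hxj).2 k h ((hAmem x k).1 hxk).1
  · refine Set.eq_univ_of_forall fun x => ?_
    have hx : ∃ j, x ∈ B j := by
      rcases Set.mem_iUnion₂.1 (ht (Set.mem_univ x)) with ⟨y, hy, hxy⟩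
      exact ⟨e.symm ⟨y, hy⟩, by simpa [hB] using hxy⟩
    set F : Finset (Fin m) := Finset.univ.filter (fun j => x ∈ B j) with hF
    have hFne : F.Nonempty := by
      rcases hx with ⟨j, hj⟩
      exact ⟨j, by simp [hF, hj]⟩
    refine Set.mem_iUnion.2 ⟨F.min' hFne, (hAmem x _).2 ⟨?_, ?_⟩⟩
    · have := F.min'_mem hFne
      simpa [hF] using this
    · intro k hk hxk
      have hkF : k ∈ F := by simp [hF, hxk]
      exact absurd (F.min'_le k hkF) (not_le.2 hk)
  · intro j x hx y hy
    have hx' : x ∈ B j := ((hAmem x j).1 hx).1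
    have hy' : y ∈ B j := ((hAmem y j).1 hy).1
    have h1 := Metric.mem_ball.1 hx'
    have h2 := Metric.mem_ball.1 hy'
    have h3 : r (e j) < δ/2 := (hr _).2
    calc dist x y ≤ dist x (e j : S) + dist (e j : S) y := dist_triangle _ _ _
      _ ≤ δ := by
          rw [dist_comm (e j : S) y]
          linarith
  · intro j
    have hsub : frontier (A j) ⊆ frontier (B j) ∪ ⋃ k ∈ Finset.Iio j, frontier (B k) := by
      have h1 : frontier (A j) ⊆ frontier (B j) ∪ frontier (⋃ k ∈ Finset.Iio j, B k) := by
        have := frontier_inter_subset (B j) ((⋃ k ∈ Finset.Iio j, B k)ᶜ)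
        rw [show A j = B j ∩ (⋃ k ∈ Finset.Iio j, B k)ᶜ from Set.diff_eq _ _]
        refine this.trans ?_
        rw [frontier_compl]
        exact Set.union_subset_union Set.inter_subset_left Set.inter_subset_right
      exact h1.trans (Set.union_subset_union subset_rfl (frontier_biUnion_subset _ _))
    refine le_antisymm ?_ zero_le
    refine le_trans (measure_mono hsub) ?_
    refine le_trans (measure_union_le _ _) ?_
    have h0 : p (frontier (B j)) = 0 := hr0 _
    have h0' : p (⋃ k ∈ Finset.Iio j, frontier (B k)) = 0 :=
      (measure_biUnion_null_iff (Finset.Iio j).countable_toSet).2 fun k _ => hr0 _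
    rw [h0, h0']
    simp

end Partition

section Repair
open scoped ENNReal
variable {S : Type*} [MeasurableSpace S] [MetricSpace S]

lemma measure_smul_apply' (x : ℝ≥0∞) (μ : Measure S) (B : Set S) : (x • μ) B = x * μ B := rfl

lemma exists_repair (p q : Measure S) [IsProbabilityMeasure p] [IsProbabilityMeasure q]
    {δ : ℝ} {m : ℕ} {A : Fin m → Set S}
    (hAm : ∀ j, MeasurableSet (A j)) (hAd : Pairwise (Disjoint on A))
    (hAc : (⋃ j, A j) = univ)
    (hAdiam : ∀ j, ∀ x ∈ A j, ∀ y ∈ A j, dist x y ≤ δ) :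
    ∃ (M : Fin m → Measure S) (idx : S → Fin m),
      Measurable idx ∧ (∀ j, IsProbabilityMeasure (M j)) ∧
      (∀ B : Set S, MeasurableSet B → ∫⁻ x, M (idx x) B ∂p = q B) ∧
      ∫⁻ x, M (idx x) {y | δ < dist x y} ∂p
        ≤ ∑ j, (p (A j) - min (p (A j)) (q (A j))) := by
  classical
  -- the index map
  have hex : ∀ x : S, ∃ j, x ∈ A j := by
    intro x
    have hx : x ∈ ⋃ j, A j := hAc.symm ▸ Set.mem_univ x
    exact Set.mem_iUnion.1 hx
  choose idx hidxmem using hex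
  have hidx_unique : ∀ x j, x ∈ A j → idx x = j := by
    intro x j hxj
    by_contra hne
    exact Set.disjoint_left.1 (hAd hne) (hidxmem x) hxj
  have hpre : ∀ j, idx ⁻¹' {j} = A j := by
    intro j; ext x
    constructor
    · intro h
      have hj : idx x = j := h
      exact hj ▸ hidxmem x
    · intro h; exact hidx_unique x j h
  have hidx : Measurable idx := measurable_to_countable' fun j => by
    rw [hpre]; exact hAm j
  -- the building blocks
  set a : Fin m → ℝ≥0∞ := fun j => p (A j) with ha
  set b : Fin m → ℝ≥0∞ := fun j => q (A j) with hb
  set cmin : Fin m → ℝ≥0∞ := fun j => min (a j) (b j) with hcmin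
  set R : ℝ≥0∞ := ∑ j, (a j - cmin j) with hRdef
  set qt : Fin m → Measure S := fun j => (b j)⁻¹ • q.restrict (A j) with hqt
  set Qbar : Measure S := ∑ j : Fin m, ((b j - cmin j) • qt j) with hQbar
  set M : Fin m → Measure S := fun j => if a j = 0 then q else
    (a j)⁻¹ • (cmin j • qt j + ((a j - cmin j) * R⁻¹) • Qbar) with hM
  have hafin : ∀ j, a j ≠ ∞ := fun j => measure_ne_top p _
  have hbfin : ∀ j, b j ≠ ∞ := fun j => measure_ne_top q _
  have hsum_meas : ∀ (r : Measure S), IsProbabilityMeasure r →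
      ∑ j, r (A j) = 1 := by
    intro r hr
    have h1 := measure_iUnion (μ := r) hAd hAm
    rw [hAc, measure_univ, tsum_fintype] at h1
    exact h1.symm
  have hsuma : ∑ j, a j = 1 := hsum_meas p inferInstance
  have hsumb : ∑ j, b j = 1 := hsum_meas q inferInstance
  have qtapp : ∀ j (B : Set S), MeasurableSet B → qt j B = (b j)⁻¹ * q (B ∩ A j) := by
    intro j B hB
    rw [hqt]
    rw [measure_smul_apply', Measure.restrict_apply hB]
  have hbqt : ∀ j (B : Set S), MeasurableSet B → b j * qt j B = q (B ∩ A j) := by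
    intro j B hB
    by_cases hbj : b j = 0
    · have hq0 : q (B ∩ A j) = 0 :=
        le_antisymm (le_trans (measure_mono Set.inter_subset_right) (le_of_eq hbj)) zero_le
      simp [qtapp j B hB, hbj, hq0]
    · rw [qtapp j B hB, ← mul_assoc, ENNReal.mul_inv_cancel hbj (hbfin j), one_mul]
  have hqt_univ : ∀ j, b j ≠ 0 → qt j univ = 1 := by
    intro j hbj
    rw [qtapp j univ MeasurableSet.univ, Set.univ_inter]
    exact ENNReal.inv_mul_cancel hbj (hbfin j)
  have hcmin_le_a : ∀ j, cmin j ≤ a j := fun j => min_le_left _ _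
  have hcmin_le_b : ∀ j, cmin j ≤ b j := fun j => min_le_right _ _
  have hsumcfin : (∑ j, cmin j) ≠ ∞ := by
    refine (lt_of_le_of_lt (Finset.sum_le_sum fun j _ => hcmin_le_a j) ?_).ne
    rw [hsuma]; exact ENNReal.one_lt_top
  have hsum_eq : ∑ j, (b j - cmin j) = ∑ j, (a j - cmin j) := by
    have h1 : (∑ j, cmin j) + ∑ j, (b j - cmin j) = 1 := by
      rw [← Finset.sum_add_distrib]
      calc (∑ j, (cmin j + (b j - cmin j))) = ∑ j, b j :=
            Finset.sum_congr rfl fun j _ => add_tsub_cancel_of_le (hcmin_le_b j)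
        _ = 1 := hsumb
    have h2 : (∑ j, cmin j) + ∑ j, (a j - cmin j) = 1 := by
      rw [← Finset.sum_add_distrib]
      calc (∑ j, (cmin j + (a j - cmin j))) = ∑ j, a j :=
            Finset.sum_congr rfl fun j _ => add_tsub_cancel_of_le (hcmin_le_a j)
        _ = 1 := hsuma
    exact (ENNReal.add_right_inj hsumcfin).1 (h1.trans h2.symm)
  have hQbar_app : ∀ (B : Set S), Qbar B = ∑ j, (b j - cmin j) * qt j B := by
    intro B
    rw [hQbar, Measure.finset_sum_apply]
    exact Finset.sum_congr rfl fun j _ => measure_smul_apply' _ _ _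
  have hQbar_univ : Qbar univ = R := by
    rw [hQbar_app, hRdef, ← hsum_eq]
    refine Finset.sum_congr rfl fun j _ => ?_
    by_cases hbj : b j = 0
    · have hb0 : b j - cmin j = 0 := by rw [hbj]; exact zero_tsub _
      simp [hb0]
    · rw [hqt_univ j hbj, mul_one]
  have hRfin : R ≠ ∞ := by
    refine (lt_of_le_of_lt (Finset.sum_le_sum fun j _ => tsub_le_self) ?_).ne
    rw [hsuma]; exact ENNReal.one_lt_top
  have hQbarfin : ∀ B, Qbar B ≤ R := fun B =>
    le_trans (measure_mono (Set.subset_univ B)) (le_of_eq hQbar_univ)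
  have hqB : ∀ (B : Set S), MeasurableSet B → q B = Qbar B + ∑ j, cmin j * qt j B := by
    intro B hB
    have hBu : ⋃ j, B ∩ A j = B := by
      rw [← Set.inter_iUnion, hAc, Set.inter_univ]
    have hBd : Pairwise (Disjoint on fun j => B ∩ A j) := fun i j hij =>
      ((hAd hij).mono Set.inter_subset_right Set.inter_subset_right)
    have h1 : q B = ∑ j, q (B ∩ A j) := by
      conv_lhs => rw [← hBu]
      rw [measure_iUnion hBd fun j => hB.inter (hAm j), tsum_fintype]
    have h2 : ∀ j, q (B ∩ A j) = (b j - cmin j) * qt j B + cmin j * qt j B := by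
      intro j
      rw [← hbqt j B hB, ← add_mul, tsub_add_cancel_of_le (hcmin_le_b j)]
    rw [h1, hQbar_app, ← Finset.sum_add_distrib]
    exact Finset.sum_congr rfl fun j _ => h2 j
  have hMapp : ∀ j (B : Set S), a j ≠ 0 → M j B =
      (a j)⁻¹ * (cmin j * qt j B + ((a j - cmin j) * R⁻¹) * Qbar B) := by
    intro j B haj
    rw [hM]
    simp only [if_neg haj]
    rw [measure_smul_apply', Measure.add_apply,
      measure_smul_apply' (cmin j) (qt j) B,
      measure_smul_apply' ((a j - cmin j) * R⁻¹) Qbar B]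
  have hR0_term : R = 0 → ∀ j, a j - cmin j = 0 := by
    intro hR0 j
    have h0 : (∑ j, (a j - cmin j)) = 0 := hRdef ▸ hR0
    exact Finset.sum_eq_zero_iff.1 h0 j (Finset.mem_univ j)
  have hMprob : ∀ j, IsProbabilityMeasure (M j) := by
    intro j
    by_cases haj : a j = 0
    · rw [hM]; simp only [if_pos haj]; infer_instance
    · constructor
      rw [hMapp j univ haj]
      by_cases hR0 : R = 0
      · have hac : a j - cmin j = 0 := hR0_term hR0 j
        have hcj : cmin j = a j := le_antisymm (hcmin_le_a j) (tsub_eq_zero_iff_le.1 hac)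
        have hbj : b j ≠ 0 := by
          intro hbj0
          refine haj ?_
          rw [← hcj, hcmin]
          simp [hbj0]
        rw [hac, hqt_univ j hbj, mul_one, hcj, zero_mul, zero_mul, add_zero]
        exact ENNReal.inv_mul_cancel haj (hafin j)
      · have hbj : cmin j ≠ 0 → b j ≠ 0 := by
          intro hcne hbj0
          refine hcne (le_antisymm ?_ zero_le)
          calc cmin j ≤ b j := hcmin_le_b j
            _ = 0 := hbj0
        have h1 : cmin j * qt j univ = cmin j := by
          by_cases hcj : cmin j = 0
          · simp [hcj]
          · rw [hqt_univ j (hbj hcj), mul_one]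
        rw [h1, hQbar_univ, mul_assoc, ENNReal.inv_mul_cancel hR0 hRfin, mul_one,
          add_tsub_cancel_of_le (hcmin_le_a j)]
        exact ENNReal.inv_mul_cancel haj (hafin j)
  have hsum_M : ∀ (B : Set S), MeasurableSet B → ∑ j, a j * M j B = q B := by
    intro B hB
    have hterm : ∀ j, a j * M j B = cmin j * qt j B + (a j - cmin j) * (R⁻¹ * Qbar B) := by
      intro j
      by_cases haj : a j = 0
      · have hc0 : cmin j = 0 := le_antisymm (haj ▸ hcmin_le_a j) zero_le
        have hac : a j - cmin j = 0 := by rw [haj]; exact zero_tsub _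
        rw [haj, hc0]; simp
      · rw [hMapp j B haj, ← mul_assoc, ENNReal.mul_inv_cancel haj (hafin j), one_mul,
          mul_assoc]
    rw [Finset.sum_congr rfl fun j _ => hterm j, Finset.sum_add_distrib, ← Finset.sum_mul,
      ← hRdef]
    by_cases hR0 : R = 0
    · have hQ0 : Qbar B = 0 := le_antisymm (hR0 ▸ hQbarfin B) zero_le
      have hq := hqB B hB
      rw [hQ0, zero_add] at hq
      rw [hQ0, mul_zero, mul_zero, add_zero]
      exact hq.symm
    · rw [← mul_assoc, ENNReal.mul_inv_cancel hR0 hRfin, one_mul, hqB B hB, add_comm]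
  have hdecomp : ∀ f : S → ℝ≥0∞, ∫⁻ x, f x ∂p = ∑ j, ∫⁻ x in A j, f x ∂p := by
    intro f
    rw [← setLIntegral_univ, ← hAc, lintegral_iUnion hAm hAd, tsum_fintype]
  refine ⟨M, idx, hidx, hMprob, ?_, ?_⟩
  · intro B hB
    rw [hdecomp]
    have hj : ∀ j, ∫⁻ x in A j, M (idx x) B ∂p = a j * M j B := by
      intro j
      rw [setLIntegral_congr_fun (hAm j)
        (fun x hx => by rw [hidx_unique x j hx])]
      rw [setLIntegral_const, mul_comm]
    rw [Finset.sum_congr rfl fun j _ => hj j]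
    exact hsum_M B hB
  · rw [hdecomp]
    refine Finset.sum_le_sum fun j _ => ?_
    have hoffsub : ∀ x ∈ A j, {y | δ < dist x y} ⊆ (A j)ᶜ := by
      intro x hx y hy hyA
      exact absurd (hAdiam j x hx y hyA) (not_le.2 hy)
    have hstep1 : ∫⁻ x in A j, M (idx x) {y | δ < dist x y} ∂p
        ≤ M j ((A j)ᶜ) * a j := by
      rw [setLIntegral_congr_fun (hAm j)
        (fun x hx => by rw [hidx_unique x j hx])]
      refine le_trans (setLIntegral_mono_ae (g := fun _ => M j ((A j)ᶜ))
        measurable_const.aemeasurable (ae_of_all _ fun x hx => measure_mono (hoffsub x hx))) ?_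
      rw [setLIntegral_const]
    refine le_trans hstep1 ?_
    by_cases haj : a j = 0
    · rw [haj, mul_zero]
      exact zero_le
    · have hMc : M j ((A j)ᶜ) ≤ (a j)⁻¹ * (a j - cmin j) := by
        rw [hMapp j _ haj]
        refine mul_le_mul_right ?_ _
        have hqt0 : qt j ((A j)ᶜ) = 0 := by
          rw [qtapp j _ (hAm j).compl, Set.compl_inter_self, measure_empty, mul_zero]
        rw [hqt0, mul_zero, zero_add]
        by_cases hR0 : R = 0
        · rw [hR0_term hR0 j, zero_mul, zero_mul]
        · calc (a j - cmin j) * R⁻¹ * Qbar ((A j)ᶜ)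
              ≤ (a j - cmin j) * R⁻¹ * R := mul_le_mul_right (hQbarfin _) _
            _ = a j - cmin j := by
                rw [mul_assoc, ENNReal.inv_mul_cancel hR0 hRfin, mul_one]
      calc M j ((A j)ᶜ) * a j ≤ (a j)⁻¹ * (a j - cmin j) * a j :=
            mul_le_mul_left hMc _
        _ = a j - cmin j := by
            rw [mul_comm, ← mul_assoc, ENNReal.mul_inv_cancel haj (hafin j), one_mul]

end Repair

section Glue
open scoped ENNReal
open ProbabilityTheory
variable {ι : Type*} [Fintype ι] {S : ι → Type*} [∀ i, MeasurableSpace (S i)]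

lemma pi_measure_eval (νs : ∀ i, Measure (S i)) [∀ i, IsProbabilityMeasure (νs i)]
    (i : ι) {B : Set (S i)} (hB : MeasurableSet B) :
    Measure.pi νs ((fun x => x i) ⁻¹' B) = νs i B := by
  classical
  have h1 : ((fun x : ∀ k, S k => x i) ⁻¹' B) = Set.pi univ (Function.update (fun k => (univ : Set (S k))) i B) := by
    exact Set.eval_preimage
  rw [h1, Measure.pi_pi]
  rw [Finset.prod_eq_single i (fun k _ hk => by rw [Function.update_of_ne hk]; exact measure_univ)
    (fun h => absurd (Finset.mem_univ i) h)]
  rw [Function.update_self]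

lemma map_eval_pi (νs : ∀ i, Measure (S i)) [∀ i, IsProbabilityMeasure (νs i)] (i : ι) :
    (Measure.pi νs).map (fun x => x i) = νs i := by
  refine Measure.ext fun B hB => ?_
  rw [Measure.map_apply (measurable_pi_apply i) hB, pi_measure_eval νs i hB]

lemma nonempty_of_probabilityMeasure {α : Type*} [MeasurableSpace α] (μ : Measure α)
    [IsProbabilityMeasure μ] : Nonempty α := by
  by_contra h
  rw [not_nonempty_iff] at h
  have h1 := measure_univ (μ := μ)
  rw [Set.univ_eq_empty_iff.2 h, measure_empty] at h1
  exact zero_ne_one h1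

lemma glue_estimate [Countable ι] [∀ i, MetricSpace (S i)] [∀ i, BorelSpace (S i)]
    [∀ i, SecondCountableTopology (S i)]
    (γ : Measure (∀ i, S i)) [IsProbabilityMeasure γ]
    (q : ∀ i, Measure (S i)) [∀ i, IsProbabilityMeasure (q i)]
    (m : ι → ℕ) (M : ∀ i, Fin (m i) → Measure (S i)) [∀ i j, IsProbabilityMeasure (M i j)]
    (idx : ∀ i, S i → Fin (m i)) (hidx : ∀ i, Measurable (idx i))
    (hrep : ∀ i (B : Set (S i)), MeasurableSet B →
      ∫⁻ t, M i (idx i t) B ∂(γ.map (fun x => x i)) = q i B)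
    (c : (∀ i, S i) → ℝ) (hc : Continuous c) (C : ℝ) (hC : ∀ x, |c x| ≤ C)
    (ε δ : ℝ) (hε : 0 ≤ ε)
    (hmod : ∀ x y : (∀ i, S i), (∀ i, dist (x i) (y i) ≤ δ) → |c x - c y| ≤ ε)
    (R : ι → ℝ) (hR0 : ∀ i, 0 ≤ R i)
    (hR : ∀ i, ∫⁻ t, M i (idx i t) {t' | δ < dist t t'} ∂(γ.map (fun x => x i))
      ≤ ENNReal.ofReal (R i)) :
    ∃ γ' : Measure (∀ i, S i), IsProbabilityMeasure γ' ∧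
      (∀ i, γ'.map (fun x => x i) = q i) ∧
      |∫ x, c x ∂γ' - ∫ x, c x ∂γ| ≤ ε + 2 * C * ∑ i, R i := by
  classical
  have hCnn : 0 ≤ C := by
    have hne : Nonempty (∀ i, S i) := nonempty_of_probabilityMeasure γ
    exact le_trans (abs_nonneg _) (hC hne.some)
  -- the product transition kernel
  haveI : MeasurableSingletonClass (∀ i, Fin (m i)) := by
    constructor
    intro J
    have h1 : ({J} : Set (∀ i, Fin (m i))) = ⋂ i, (fun K => K i) ⁻¹' {J i} := by
      ext K; simp [funext_iff]
    rw [h1]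
    exact MeasurableSet.iInter fun i => measurable_pi_apply i (measurableSet_singleton _)
  have hmeas_pi : Measurable (fun x : ∀ i, S i => Measure.pi (fun i => M i (idx i (x i)))) := by
    have h1 : Measurable (fun x : ∀ i, S i => fun i => idx i (x i)) :=
      measurable_pi_lambda _ fun i => (hidx i).comp (measurable_pi_apply i)
    exact (measurable_of_countable (fun J : ∀ i, Fin (m i) =>
      Measure.pi (fun i => M i (J i)))).comp h1
  set κ : Kernel (∀ i, S i) (∀ i, S i) :=
    ⟨fun x => Measure.pi (fun i => M i (idx i (x i))), hmeas_pi⟩ with hκdef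
  have hκapp : ∀ x, κ x = Measure.pi (fun i => M i (idx i (x i))) := fun x => rfl
  haveI : IsMarkovKernel κ := ⟨fun x => by rw [hκapp]; infer_instance⟩
  set η : Measure ((∀ i, S i) × (∀ i, S i)) := γ.compProd κ with hηdef
  haveI : IsProbabilityMeasure η := by
    constructor
    rw [hηdef, Measure.compProd_apply MeasurableSet.univ]
    simp
  set γ' : Measure (∀ i, S i) := η.map Prod.snd with hγ'def
  haveI : IsProbabilityMeasure γ' := Measure.isProbabilityMeasure_map ((measurable_snd : Measurable fun z : (∀ i, S i) × (∀ i, S i) => z.2)).aemeasurable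
  have hMB_meas : ∀ i (B : Set (S i)), Measurable (fun t => M i (idx i t) B) := by
    intro i B
    exact (measurable_of_countable (fun j : Fin (m i) => M i j B)).comp (hidx i)
  -- marginals
  have hmarg : ∀ i, γ'.map (fun x => x i) = q i := by
    intro i
    refine Measure.ext fun B hB => ?_
    rw [hγ'def, Measure.map_map (measurable_pi_apply i) (measurable_snd : Measurable fun z : (∀ i, S i) × (∀ i, S i) => z.2)]
    have hsB : MeasurableSet (((fun x : ∀ i, S i => x i) ∘ Prod.snd) ⁻¹' B) :=
      (measurable_pi_apply i).comp (measurable_snd : Measurable fun z : (∀ i, S i) × (∀ i, S i) => z.2) hB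
    rw [Measure.map_apply ((measurable_pi_apply i).comp (measurable_snd : Measurable fun z : (∀ i, S i) × (∀ i, S i) => z.2)) hB]
    rw [hηdef, Measure.compProd_apply hsB]
    have hx : ∀ x : ∀ i, S i,
        κ x (Prod.mk x ⁻¹' (((fun x : ∀ i, S i => x i) ∘ Prod.snd) ⁻¹' B))
          = M i (idx i (x i)) B := by
      intro x
      have h2 : (Prod.mk x ⁻¹' (((fun x : ∀ i, S i => x i) ∘ Prod.snd) ⁻¹' B))
          = (fun y : ∀ i, S i => y i) ⁻¹' B := rfl
      rw [h2, hκapp, pi_measure_eval _ i hB]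
    simp_rw [hx]
    rw [← lintegral_map (hMB_meas i B) (measurable_pi_apply i)]
    exact hrep i B hB
  -- first marginal of η is γ
  have hfst : η.map Prod.fst = γ := by
    have h1 : η.fst = γ := Measure.fst_compProd γ κ
    exact h1
  -- cost estimate
  have hcsm : AEStronglyMeasurable c γ' := hc.aestronglyMeasurable
  have hint2 : ∫ x, c x ∂γ' = ∫ z, c z.2 ∂η := by
    rw [hγ'def, integral_map measurable_snd.aemeasurable hc.aestronglyMeasurable]
  have hint1 : ∫ x, c x ∂γ = ∫ z, c z.1 ∂η := by
    conv_lhs => rw [← hfst]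
    rw [integral_map measurable_fst.aemeasurable hc.aestronglyMeasurable]
  have hcint2 : Integrable (fun z : (∀ i, S i) × (∀ i, S i) => c z.2) η :=
    (integrable_const C).mono' (hc.comp continuous_snd).aestronglyMeasurable
      (ae_of_all _ fun z => by rw [Real.norm_eq_abs]; exact hC _)
  have hcint1 : Integrable (fun z : (∀ i, S i) × (∀ i, S i) => c z.1) η :=
    (integrable_const C).mono' (hc.comp continuous_fst).aestronglyMeasurable
      (ae_of_all _ fun z => by rw [Real.norm_eq_abs]; exact hC _)
  have hsubint : ∫ x, c x ∂γ' - ∫ x, c x ∂γ = ∫ z, (c z.2 - c z.1) ∂η := by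
    rw [hint1, hint2, ← integral_sub hcint2 hcint1]
  set E : Set ((∀ i, S i) × (∀ i, S i)) := {z | ∀ i, dist (z.1 i) (z.2 i) ≤ δ} with hEdef
  have hdistcont : ∀ i, Continuous (fun z : (∀ i, S i) × (∀ i, S i) => dist (z.1 i) (z.2 i)) :=
    fun i => ((continuous_apply i).comp continuous_fst).dist
      ((continuous_apply i).comp continuous_snd)
  have hEmeas : MeasurableSet E := by
    have h1 : E = ⋂ i, {z : (∀ i, S i) × (∀ i, S i) | dist (z.1 i) (z.2 i) ≤ δ} := by
      ext z; simp [hEdef]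
    rw [h1]
    exact MeasurableSet.iInter fun i =>
      (isClosed_le (hdistcont i) continuous_const).measurableSet
  have hEc : η Eᶜ ≤ ENNReal.ofReal (∑ i, R i) := by
    have h1 : Eᶜ = ⋃ i, {z : (∀ i, S i) × (∀ i, S i) | δ < dist (z.1 i) (z.2 i)} := by
      ext z; simp [hEdef, not_forall, not_le]
    have hui : ∀ i, MeasurableSet {z : (∀ i, S i) × (∀ i, S i) | δ < dist (z.1 i) (z.2 i)} :=
      fun i => (isOpen_lt continuous_const (hdistcont i)).measurableSet
    have h2 : ∀ i, η {z : (∀ i, S i) × (∀ i, S i) | δ < dist (z.1 i) (z.2 i)}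
        ≤ ENNReal.ofReal (R i) := by
      intro i
      rw [hηdef, Measure.compProd_apply (hui i)]
      have hx : ∀ x : ∀ i, S i,
          κ x (Prod.mk x ⁻¹' {z : (∀ i, S i) × (∀ i, S i) | δ < dist (z.1 i) (z.2 i)})
            = M i (idx i (x i)) {t' | δ < dist (x i) t'} := by
        intro x
        have h3 : (Prod.mk x ⁻¹' {z : (∀ i, S i) × (∀ i, S i) | δ < dist (z.1 i) (z.2 i)})
            = (fun y : ∀ k, S k => y i) ⁻¹' {t' | δ < dist (x i) t'} := rfl
        have hcx : Continuous fun t' : S i => dist (x i) t' := continuous_const.dist continuous_id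
        rw [h3, hκapp, pi_measure_eval _ i (isOpen_lt continuous_const hcx).measurableSet]
      simp_rw [hx]
      -- measurability of the joint map
      set κi : Kernel (S i) (S i) := ⟨fun t => M i (idx i t),
        (measurable_of_countable (M i)).comp (hidx i)⟩ with hκidef
      haveI : IsMarkovKernel κi := ⟨fun t => by infer_instance⟩
      have hu : MeasurableSet {st : S i × S i | δ < dist st.1 st.2} :=
        (isOpen_lt continuous_const continuous_dist).measurableSet
      have hjm : Measurable (fun t : S i => M i (idx i t) {t' | δ < dist t t'}) := by
        have := Kernel.measurable_kernel_prodMk_left (κ := κi) hu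
        exact this
      rw [← lintegral_map hjm (measurable_pi_apply i)]
      exact hR i
    calc η Eᶜ ≤ ∑' i, η {z : (∀ i, S i) × (∀ i, S i) | δ < dist (z.1 i) (z.2 i)} := by
          rw [h1]; exact measure_iUnion_le _
      _ = ∑ i, η {z : (∀ i, S i) × (∀ i, S i) | δ < dist (z.1 i) (z.2 i)} := tsum_fintype _
      _ ≤ ∑ i, ENNReal.ofReal (R i) := Finset.sum_le_sum fun i _ => h2 i
      _ = ENNReal.ofReal (∑ i, R i) := (ENNReal.ofReal_sum_of_nonneg fun i _ => hR0 i).symm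
  refine ⟨γ', inferInstance, hmarg, ?_⟩
  rw [hsubint]
  have hfint : Integrable (fun z : (∀ i, S i) × (∀ i, S i) => c z.2 - c z.1) η :=
    hcint2.sub hcint1
  have h1 : |∫ z, (c z.2 - c z.1) ∂η| ≤ ∫ z, |c z.2 - c z.1| ∂η := by
    simpa [Real.norm_eq_abs] using
      norm_integral_le_integral_norm (μ := η) (fun z : (∀ i, S i) × (∀ i, S i) => c z.2 - c z.1)
  refine h1.trans ?_
  have hgint : Integrable (fun z : (∀ i, S i) × (∀ i, S i) =>
      ε + Set.indicator Eᶜ (fun _ => 2*C) z) η :=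
    (integrable_const ε).add ((integrable_const (2*C)).indicator hEmeas.compl)
  have h2 : ∫ z, |c z.2 - c z.1| ∂η
      ≤ ∫ z, (ε + Set.indicator Eᶜ (fun _ => 2*C) z) ∂η := by
    refine integral_mono hfint.abs hgint fun z => ?_
    by_cases hz : z ∈ E
    · have hz' : z ∉ Eᶜ := fun h => h hz
      rw [Set.indicator_of_notMem hz', add_zero]
      have := hmod z.1 z.2 hz
      rw [abs_sub_comm] at this
      exact this
    · rw [Set.indicator_of_mem (Set.mem_compl hz)]
      have hb : |c z.2 - c z.1| ≤ 2*C := by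
        rw [sub_eq_add_neg]
        refine (abs_add_le _ _).trans ?_
        rw [abs_neg]
        have := hC z.1; have := hC z.2
        linarith
      linarith
  refine h2.trans ?_
  have h3 : ∫ z, (ε + Set.indicator Eᶜ (fun _ => 2*C) z) ∂η
      = ε + (η Eᶜ).toReal * (2*C) := by
    rw [integral_add (integrable_const ε) ((integrable_const (2*C)).indicator hEmeas.compl),
      integral_const, integral_indicator_const _ hEmeas.compl]
    simp [smul_eq_mul, Measure.real]
  rw [h3]
  have h4 : (η Eᶜ).toReal ≤ ∑ i, R i :=
    ENNReal.toReal_le_of_le_ofReal (Finset.sum_nonneg fun i _ => hR0 i) hEc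
  have h5 : (η Eᶜ).toReal * (2*C) ≤ (∑ i, R i) * (2*C) :=
    mul_le_mul_of_nonneg_right h4 (by linarith)
  linarith

end Glue

section Small
open scoped ENNReal NNReal

lemma nn_sub_min_le (u v : ℝ≥0) : u - min u v ≤ nndist u v := by
  rcases le_total v u with h | h
  · rw [min_eq_right h, NNReal.nndist_eq]
    exact le_max_left _ _
  · rw [min_eq_left h, tsub_self]
    exact zero_le

lemma ennreal_sub_min_le (u v : ℝ≥0) :
    (u : ℝ≥0∞) - min (u : ℝ≥0∞) (v : ℝ≥0∞) ≤ ENNReal.ofReal (dist u v) := by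
  rw [← ENNReal.coe_min, ← ENNReal.coe_sub, dist_nndist, ENNReal.ofReal_coe_nnreal]
  exact ENNReal.coe_le_coe.2 (nn_sub_min_le u v)

lemma eventually_sum_small {S : Type*} [MeasurableSpace S] [MetricSpace S] [BorelSpace S]
    (μ : ProbabilityMeasure S) (μs : ℕ → ProbabilityMeasure S)
    (hconv : Tendsto μs atTop (𝓝 μ)) {m : ℕ} {A : Fin m → Set S}
    (hA0 : ∀ j, (μ : Measure S) (frontier (A j)) = 0)
    {ρ : ℝ} (hρ : 0 < ρ) :
    ∀ᶠ ν in atTop,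
      ((∑ j, ((μ : Measure S) (A j)
        - min ((μ : Measure S) (A j)) ((μs ν : Measure S) (A j)))) ≤ ENNReal.ofReal ρ)
      ∧ ((∑ j, ((μs ν : Measure S) (A j)
        - min ((μs ν : Measure S) (A j)) ((μ : Measure S) (A j)))) ≤ ENNReal.ofReal ρ) := by
  have hj : ∀ j, Tendsto (fun ν => μs ν (A j)) atTop (𝓝 (μ (A j))) := by
    intro j
    refine ProbabilityMeasure.tendsto_measure_of_null_frontier_of_tendsto hconv ?_
    have h1 := hA0 j
    rw [← ProbabilityMeasure.ennreal_coeFn_eq_coeFn_toMeasure] at h1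
    exact_mod_cast h1
  set e : ℝ := ρ / (m + 1) with he
  have he0 : 0 < e := by positivity
  have hev : ∀ᶠ ν in atTop, ∀ j, dist (μs ν (A j)) (μ (A j)) < e :=
    eventually_all.2 fun j => Metric.tendsto_nhds.mp (hj j) e he0
  have hme : (m : ℝ) * e ≤ ρ := by
    have hm1 : (0:ℝ) < (m : ℝ) + 1 := by positivity
    have h1 : (m:ℝ) * e = ρ * ((m:ℝ)/((m:ℝ)+1)) := by rw [he]; ring
    have h2 : (m:ℝ)/((m:ℝ)+1) ≤ 1 := by
      rw [div_le_one hm1]; linarith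
    calc (m:ℝ) * e = ρ * ((m:ℝ)/((m:ℝ)+1)) := h1
      _ ≤ ρ * 1 := mul_le_mul_of_nonneg_left h2 hρ.le
      _ = ρ := mul_one ρ
  have hsum_le : ∀ (f : Fin m → ℝ≥0∞), (∀ j, f j ≤ ENNReal.ofReal e) →
      (∑ j, f j) ≤ ENNReal.ofReal ρ := by
    intro f hf
    calc (∑ j, f j) ≤ ∑ _j : Fin m, ENNReal.ofReal e := Finset.sum_le_sum fun j _ => hf j
      _ = (m : ℝ≥0∞) * ENNReal.ofReal e := by
          rw [Finset.sum_const, Finset.card_univ, Fintype.card_fin, nsmul_eq_mul]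
      _ = ENNReal.ofReal ((m : ℝ) * e) := by
          rw [ENNReal.ofReal_mul (Nat.cast_nonneg m), ENNReal.ofReal_natCast]
      _ ≤ ENNReal.ofReal ρ := ENNReal.ofReal_le_ofReal hme
  refine hev.mono fun ν hν => ⟨hsum_le _ fun j => ?_, hsum_le _ fun j => ?_⟩
  · rw [← ProbabilityMeasure.ennreal_coeFn_eq_coeFn_toMeasure μ (A j),
      ← ProbabilityMeasure.ennreal_coeFn_eq_coeFn_toMeasure (μs ν) (A j)]
    refine (ennreal_sub_min_le _ _).trans (ENNReal.ofReal_le_ofReal ?_)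
    rw [dist_comm]
    exact (hν j).le
  · rw [← ProbabilityMeasure.ennreal_coeFn_eq_coeFn_toMeasure μ (A j),
      ← ProbabilityMeasure.ennreal_coeFn_eq_coeFn_toMeasure (μs ν) (A j)]
    refine (ennreal_sub_min_le _ _).trans (ENNReal.ofReal_le_ofReal ?_)
    exact (hν j).le

end Small

/-- first half of Theorem 1 of the paper, justification of the
discretization: if the finitely supported marginals μᵢ^{(ν)} converge weak* to
the marginals μᵢ, then the optimal cost of the discretized multi-marginal
optimal transport problem converges to the optimal cost of the continuous
problem. -/
theorem discretized_MMOT_cost_converges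
    (d N : ℕ) (X : Fin N → Set (EuclideanSpace ℝ (Fin d)))
    (hX : ∀ i, IsCompact (X i))
    (c : (∀ i, ↥(X i)) → ℝ) (hc : Continuous c)
    (μ : ∀ i, ProbabilityMeasure ↥(X i))
    (μn : ℕ → ∀ i, ProbabilityMeasure ↥(X i))
    (hfin : ∀ ν i, ∃ s : Finset ↥(X i),
      (μn ν i : Measure ↥(X i)) ((↑s : Set ↥(X i))ᶜ) = 0)
    (hconv : ∀ i, Tendsto (fun ν => μn ν i) atTop (𝓝 (μ i))) :
    Tendsto
      (fun ν => sInf { r : ℝ | ∃ γ : ProbabilityMeasure (∀ i, ↥(X i)),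
        (∀ i, (γ : Measure (∀ i, ↥(X i))).map (fun x => x i) = μn ν i) ∧
        r = ∫ x, c x ∂(γ : Measure (∀ i, ↥(X i))) })
      atTop
      (𝓝 (sInf { r : ℝ | ∃ γ : ProbabilityMeasure (∀ i, ↥(X i)),
        (∀ i, (γ : Measure (∀ i, ↥(X i))).map (fun x => x i) = μ i) ∧
        r = ∫ x, c x ∂(γ : Measure (∀ i, ↥(X i))) })) := by
  classical
  haveI : ∀ i, CompactSpace ↥(X i) := fun i => isCompact_iff_compactSpace.mp (hX i)
  haveI : ∀ i, Nonempty ↥(X i) := fun i =>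
    nonempty_of_probabilityMeasure (μ i : Measure ↥(X i))
  -- uniform bound on the cost
  obtain ⟨x₀, hx₀, hx₀'⟩ := isCompact_univ.exists_isMaxOn (Set.univ_nonempty)
    (hc.abs.continuousOn : ContinuousOn (fun x : ∀ i, ↥(X i) => |c x|) univ)
  set C : ℝ := |c x₀| with hCdef
  have hC : ∀ x : ∀ i, ↥(X i), |c x| ≤ C := fun x => hx₀' (Set.mem_univ x)
  have hC0 : 0 ≤ C := abs_nonneg _
  -- the feasible cost sets
  set T : (∀ i, ProbabilityMeasure ↥(X i)) → Set ℝ := fun ms =>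
    { r : ℝ | ∃ γ : ProbabilityMeasure (∀ i, ↥(X i)),
        (∀ i, (γ : Measure (∀ i, ↥(X i))).map (fun x => x i) = ms i) ∧
        r = ∫ x, c x ∂(γ : Measure (∀ i, ↥(X i))) } with hT
  have hTne : ∀ ms : ∀ i, ProbabilityMeasure ↥(X i), (T ms).Nonempty := by
    intro ms
    refine ⟨∫ x, c x ∂(Measure.pi (fun i => (ms i : Measure ↥(X i)))),
      ⟨⟨Measure.pi (fun i => (ms i : Measure ↥(X i))), inferInstance⟩, ?_, rfl⟩⟩
    intro i
    exact map_eval_pi (fun i => (ms i : Measure ↥(X i))) i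
  have hTlb : ∀ (ms : ∀ i, ProbabilityMeasure ↥(X i)) r, r ∈ T ms → -C ≤ r := by
    rintro ms r ⟨γ, -, rfl⟩
    have h1 : ‖∫ x, c x ∂(γ : Measure (∀ i, ↥(X i)))‖ ≤ C := by
      refine le_trans (norm_integral_le_of_norm_le_const
        (ae_of_all _ fun x => by rw [Real.norm_eq_abs]; exact hC x)) ?_
      simp
    rw [Real.norm_eq_abs] at h1
    linarith [(abs_le.1 h1).1]
  have hTbdd : ∀ ms : ∀ i, ProbabilityMeasure ↥(X i), BddBelow (T ms) :=
    fun ms => ⟨-C, fun r hr => hTlb ms r hr⟩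
  rw [Metric.tendsto_atTop]
  intro ε hε
  -- modulus of continuity of c
  obtain ⟨δ₀, hδ₀, hδ₀'⟩ := Metric.uniformContinuous_iff.1
    (CompactSpace.uniformContinuous_of_continuous hc) (ε/4) (by linarith)
  set δ : ℝ := δ₀ / 2 with hδdef
  have hδ : 0 < δ := by positivity
  have hmod : ∀ x y : ∀ i, ↥(X i), (∀ i, dist (x i) (y i) ≤ δ) → |c x - c y| ≤ ε/4 := by
    intro x y h
    have hxy : dist x y ≤ δ := (dist_pi_le_iff hδ.le).2 h
    have h2 : dist x y < δ₀ := lt_of_le_of_lt hxy (by rw [hδdef]; linarith)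
    have h3 := hδ₀' h2
    rw [Real.dist_eq] at h3
    exact h3.le
  -- the partitions
  have hpart := fun i : Fin N =>
    exists_partition (S := ↥(X i)) (μ i : Measure ↥(X i)) hδ
  choose m A hAmeas hAdisj hAcov hAdiam hAnull using hpart
  -- smallness parameter
  have hden : (0:ℝ) < 2*C*N + 1 := by
    have h1 : (0:ℝ) ≤ 2*C*N :=
      mul_nonneg (mul_nonneg (by norm_num) hC0) (Nat.cast_nonneg N)
    linarith
  set ρ : ℝ := ε / (4 * (2*C*N + 1)) with hρdef
  have hρ : 0 < ρ := by
    refine div_pos hε ?_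
    linarith
  set b : ℝ := ε/4 + 2*C*((N:ℝ)*ρ) with hbdef
  have hbb : b ≤ ε/2 := by
    have h3 : (2*C*(N:ℝ)) * ρ ≤ (2*C*(N:ℝ)+1) * ρ :=
      mul_le_mul_of_nonneg_right (by linarith) hρ.le
    have h4 : (2*C*(N:ℝ)+1) * ρ = ε/4 := by
      rw [hρdef]
      field_simp
    have h5 : 2*C*((N:ℝ)*ρ) ≤ ε/4 := by
      calc 2*C*((N:ℝ)*ρ) = (2*C*(N:ℝ)) * ρ := by ring
        _ ≤ (2*C*(N:ℝ)+1) * ρ := h3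
        _ = ε/4 := h4
    rw [hbdef]
    linarith
  -- eventual smallness of the discretization error
  have hall : ∀ᶠ ν in atTop, ∀ i,
      ((∑ j, ((μ i : Measure ↥(X i)) (A i j)
        - min ((μ i : Measure ↥(X i)) (A i j)) ((μn ν i : Measure ↥(X i)) (A i j))))
          ≤ ENNReal.ofReal ρ)
      ∧ ((∑ j, ((μn ν i : Measure ↥(X i)) (A i j)
        - min ((μn ν i : Measure ↥(X i)) (A i j)) ((μ i : Measure ↥(X i)) (A i j))))
          ≤ ENNReal.ofReal ρ) :=
    eventually_all.2 fun i =>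
      eventually_sum_small (μ i) (fun ν => μn ν i) (hconv i) (hAnull i) hρ
  obtain ⟨N₀, hN₀⟩ := eventually_atTop.1 hall
  refine ⟨N₀, fun ν hν => ?_⟩
  have hsm := hN₀ ν hν
  -- the key one-sided estimate
  have main : ∀ ps qs : ∀ i, ProbabilityMeasure ↥(X i),
      (∀ i, (∑ j, ((ps i : Measure ↥(X i)) (A i j)
          - min ((ps i : Measure ↥(X i)) (A i j)) ((qs i : Measure ↥(X i)) (A i j))))
        ≤ ENNReal.ofReal ρ) →
      sInf (T qs) ≤ sInf (T ps) + b := by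
    intro ps qs hsb
    have hker := fun i => exists_repair (ps i : Measure ↥(X i)) (qs i : Measure ↥(X i))
      (hAmeas i) (hAdisj i) (hAcov i) (hAdiam i)
    choose M idx hidxm hMp hrep hoff using hker
    haveI : ∀ i j, IsProbabilityMeasure (M i j) := fun i j => hMp i j
    rw [← sub_le_iff_le_add]
    refine le_csInf (hTne ps) ?_
    rintro r ⟨γ, hγm, rfl⟩
    obtain ⟨γ', hγ'p, hγ'm, hγ'c⟩ := glue_estimate (γ : Measure (∀ i, ↥(X i)))
      (fun i => (qs i : Measure ↥(X i))) m M idx hidxm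
      (fun i B hB => by rw [hγm i]; exact hrep i B hB)
      c hc C hC (ε/4) δ (by linarith) hmod (fun _ => ρ) (fun _ => hρ.le)
      (fun i => by rw [hγm i]; exact (hoff i).trans (hsb i))
    have h1 : sInf (T qs) ≤ ∫ x, c x ∂γ' := by
      haveI := hγ'p
      exact csInf_le (hTbdd qs) ⟨⟨γ', hγ'p⟩, hγ'm, rfl⟩
    have hSR : (∑ _i : Fin N, ρ) = (N:ℝ) * ρ := by
      rw [Finset.sum_const, Finset.card_univ, Fintype.card_fin, nsmul_eq_mul]
    have h2 : |∫ x, c x ∂γ' - ∫ x, c x ∂(γ : Measure (∀ i, ↥(X i)))| ≤ b := by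
      refine hγ'c.trans ?_
      rw [hSR, hbdef]
    linarith [(abs_le.1 h2).2, h1]
  have d1 : sInf (T (μn ν)) ≤ sInf (T μ) + b := main μ (μn ν) (fun i => (hsm i).1)
  have d2 : sInf (T μ) ≤ sInf (T (μn ν)) + b := main (μn ν) μ (fun i => (hsm i).2)
  have habs : |sInf (T (μn ν)) - sInf (T μ)| ≤ b :=
    abs_sub_le_iff.2 ⟨by linarith, by linarith⟩
  show dist (sInf (T (μn ν))) (sInf (T μ)) < ε
  rw [Real.dist_eq]
  calc |sInf (T (μn ν)) - sInf (T μ)| ≤ b := habs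
    _ ≤ ε/2 := hbb
    _ < ε := by linarith
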